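/- Let (βₜ) ⊂ (0,1] with β₁ = 1 and define θⱼ⁽ᵗ⁾ = βⱼ·∏_{i=j+1}^{t}(1 − βᵢ) for j < t and θₜ⁽ᵗ⁾ = βₜ. Given sequences (zₜ) in ℝ^p and (ḡₜ) in ℝ^n, define θ_{t+1} = Σ_{j=1}^{t} θⱼ⁽ᵗ⁾ z_{j+1} and y_{t+1} = Σ_{j=1}^{t} θⱼ⁽ᵗ⁾ ḡⱼ. Suppose g : ℝ^p → ℝ^n is L_g-smooth (its Jacobian is L_g-Lipschitz). Then ‖y_{t+1} − g(θ_{t+1})‖ ≤ (L_g/2)·Σ_{j=1}^{t} θⱼ⁽ᵗ⁾‖z_{j+1} − θ_{t+1}‖² + ‖Σ_{j=1}^{t} θⱼ⁽ᵗ⁾[ḡⱼ − g(z_{j+1})]‖. -/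

import Mathlib

/-- The convex-combination coefficients `θⱼ⁽ᵗ⁾ = βⱼ ∏_{i=j+1}^t (1 - βᵢ)`. -/
def smoothingCoef (β : ℕ → ℝ) (j t : ℕ) : ℝ :=
  β j * ∏ i ∈ Finset.Icc (j + 1) t, (1 - β i)

/-- Quadratic Taylor remainder bound for a function with Lipschitz derivative. -/
lemma taylor_quad_bound {E F : Type*} [NormedAddCommGroup E] [NormedSpace ℝ E]
    [NormedAddCommGroup F] [NormedSpace ℝ F]
    (g : E → F) (Lg : ℝ) (hg : Differentiable ℝ g)
    (hgS : ∀ x₁ x₂, ‖fderiv ℝ g x₁ - fderiv ℝ g x₂‖ ≤ Lg * ‖x₁ - x₂‖)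
    (x y : E) :
    ‖g y - g x - fderiv ℝ g x (y - x)‖ ≤ Lg / 2 * ‖y - x‖ ^ 2 := by
  set d := y - x with hd
  set c := fderiv ℝ g x d with hc
  set f : ℝ → F := fun s => g (x + s • d) - g x - s • c with hf
  set f' : ℝ → F := fun s => fderiv ℝ g (x + s • d) d - c with hf'
  have hderiv : ∀ s : ℝ, HasDerivAt f (f' s) s := by
    intro s
    have h1 : HasDerivAt (fun s : ℝ => x + s • d) d s := by
      simpa using ((hasDerivAt_id s).smul_const d).const_add x
    have h2 : HasDerivAt (fun s : ℝ => g (x + s • d)) (fderiv ℝ g (x + s • d) d) s :=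
      (hg (x + s • d)).hasFDerivAt.comp_hasDerivAt s h1
    have h3 : HasDerivAt (fun s : ℝ => s • c) c s := by
      simpa using (hasDerivAt_id s).smul_const c
    exact (h2.sub_const (g x)).sub h3
  set B : ℝ → ℝ := fun s => Lg / 2 * ‖d‖ ^ 2 * s ^ 2 with hB
  have hBderiv : ∀ s : ℝ, HasDerivAt B (Lg * ‖d‖ ^ 2 * s) s := by
    intro s
    have := (hasDerivAt_pow 2 s).const_mul (Lg / 2 * ‖d‖ ^ 2)
    exact this.congr_deriv (by rw [show (2:ℕ) - 1 = 1 from rfl]; push_cast; ring)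
  have bound : ∀ s ∈ Set.Ico (0 : ℝ) 1, ‖f' s‖ ≤ Lg * ‖d‖ ^ 2 * s := by
    intro s hs
    have h1 : ‖f' s‖ ≤ ‖fderiv ℝ g (x + s • d) - fderiv ℝ g x‖ * ‖d‖ := by
      have := (fderiv ℝ g (x + s • d) - fderiv ℝ g x).le_opNorm d
      simpa [hf', hc] using this
    have h2 : ‖fderiv ℝ g (x + s • d) - fderiv ℝ g x‖ ≤ Lg * (s * ‖d‖) := by
      have := hgS (x + s • d) x
      simpa [norm_smul, abs_of_nonneg hs.1] using this
    calc ‖f' s‖ ≤ (Lg * (s * ‖d‖)) * ‖d‖ :=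
          h1.trans (mul_le_mul_of_nonneg_right h2 (norm_nonneg d))
      _ = Lg * ‖d‖ ^ 2 * s := by ring
  have key : ∀ s ∈ Set.Icc (0 : ℝ) 1, ‖f s‖ ≤ B s := by
    have ha : ‖f 0‖ ≤ B 0 := by simp [hf, hB]
    exact fun s hs => image_norm_le_of_norm_deriv_right_le_deriv_boundary
      (fun s _ => (hderiv s).continuousAt.continuousWithinAt)
      (fun s _ => (hderiv s).hasDerivWithinAt) ha hBderiv bound hs
  have h1 := key 1 (by norm_num)
  simpa [hf, hB, hd] using h1

/-- The smoothing coefficients sum to one when `β 1 = 1`. -/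
lemma smoothingCoef_sum_one (β : ℕ → ℝ) (hβ1 : β 1 = 1) :
    ∀ t, 1 ≤ t → ∑ j ∈ Finset.Icc 1 t, smoothingCoef β j t = 1 := by
  intro t ht
  induction t with
  | zero => omega
  | succ t ih =>
    rcases Nat.eq_or_lt_of_le ht with h | h
    · simp [← h, smoothingCoef, hβ1]
    · have ht' : 1 ≤ t := by omega
      rw [Finset.sum_Icc_succ_top (by omega : 1 ≤ t + 1)]
      have hlast : smoothingCoef β (t + 1) (t + 1) = β (t + 1) := by
        simp [smoothingCoef]
      have hstep : ∀ j ∈ Finset.Icc 1 t,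
          smoothingCoef β j (t + 1) = smoothingCoef β j t * (1 - β (t + 1)) := by
        intro j hj
        have hjt : j + 1 ≤ t + 1 := by
          have := (Finset.mem_Icc.mp hj).2; omega
        rw [smoothingCoef, smoothingCoef, Finset.prod_Icc_succ_top hjt]
        ring
      rw [Finset.sum_congr rfl hstep, ← Finset.sum_mul, ih ht', hlast]
      ring

/-- with `θ_{t+1} = Σⱼ θⱼ⁽ᵗ⁾ z_{j+1}` and `y_{t+1} = Σⱼ θⱼ⁽ᵗ⁾ ḡⱼ`, and `g`
`L_g`-smooth, one has
`‖y_{t+1} − g(θ_{t+1})‖ ≤ (L_g/2) Σⱼ θⱼ⁽ᵗ⁾‖z_{j+1} − θ_{t+1}‖² + ‖Σⱼ θⱼ⁽ᵗ⁾(ḡⱼ − g(z_{j+1}))‖`. -/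
theorem smoothing_tracking_error_bound {p n : ℕ}
    (β : ℕ → ℝ) (hβ : ∀ t, β t ∈ Set.Ioc (0 : ℝ) 1) (hβ1 : β 1 = 1)
    (g : EuclideanSpace ℝ (Fin p) → EuclideanSpace ℝ (Fin n)) (Lg : ℝ)
    (hg : Differentiable ℝ g)
    (hgSmooth : ∀ x₁ x₂, ‖fderiv ℝ g x₁ - fderiv ℝ g x₂‖ ≤ Lg * ‖x₁ - x₂‖)
    (z : ℕ → EuclideanSpace ℝ (Fin p)) (gbar : ℕ → EuclideanSpace ℝ (Fin n))
    (t : ℕ) (ht : 1 ≤ t) :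
    ‖(∑ j ∈ Finset.Icc 1 t, smoothingCoef β j t • gbar j) -
        g (∑ j ∈ Finset.Icc 1 t, smoothingCoef β j t • z (j + 1))‖
      ≤ Lg / 2 *
          ∑ j ∈ Finset.Icc 1 t, smoothingCoef β j t *
            ‖z (j + 1) - ∑ j' ∈ Finset.Icc 1 t, smoothingCoef β j' t • z (j' + 1)‖ ^ 2
        + ‖∑ j ∈ Finset.Icc 1 t, smoothingCoef β j t • (gbar j - g (z (j + 1)))‖ := by
  set S := Finset.Icc 1 t with hS
  set θ : ℕ → ℝ := fun j => smoothingCoef β j t with hθ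
  set xb := ∑ j ∈ S, θ j • z (j + 1) with hxb
  have hsum : ∑ j ∈ S, θ j = 1 := smoothingCoef_sum_one β hβ1 t ht
  have hθ0 : ∀ j, 0 ≤ θ j := by
    intro j
    exact mul_nonneg (hβ j).1.le
      (Finset.prod_nonneg fun i _ => by linarith [(hβ i).2])
  have hgx : ∑ j ∈ S, θ j • g xb = g xb := by
    rw [← Finset.sum_smul, hsum, one_smul]
  have hzero : ∑ j ∈ S, θ j • (fderiv ℝ g xb (z (j + 1) - xb)) = 0 := by
    have hv : ∑ j ∈ S, θ j • (z (j + 1) - xb) = 0 := by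
      simp only [smul_sub, Finset.sum_sub_distrib, ← Finset.sum_smul, hsum, one_smul]
      rw [← hxb, sub_self]
    have hmap : (fderiv ℝ g xb) (∑ j ∈ S, θ j • (z (j + 1) - xb))
        = ∑ j ∈ S, θ j • fderiv ℝ g xb (z (j + 1) - xb) := by
      rw [map_sum]
      exact Finset.sum_congr rfl fun j _ => by rw [map_smul]
    rw [← hmap, hv, map_zero]
  have key : (∑ j ∈ S, θ j • gbar j) - g xb
      = (∑ j ∈ S, θ j • (g (z (j + 1)) - g xb - fderiv ℝ g xb (z (j + 1) - xb)))
        + ∑ j ∈ S, θ j • (gbar j - g (z (j + 1))) := by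
    simp only [smul_sub, Finset.sum_sub_distrib]
    rw [hgx, hzero]
    abel
  have hrem : ‖∑ j ∈ S, θ j • (g (z (j + 1)) - g xb - fderiv ℝ g xb (z (j + 1) - xb))‖
      ≤ Lg / 2 * ∑ j ∈ S, θ j * ‖z (j + 1) - xb‖ ^ 2 := by
    calc ‖∑ j ∈ S, θ j • (g (z (j + 1)) - g xb - fderiv ℝ g xb (z (j + 1) - xb))‖
        ≤ ∑ j ∈ S, ‖θ j • (g (z (j + 1)) - g xb - fderiv ℝ g xb (z (j + 1) - xb))‖ :=
          norm_sum_le _ _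
      _ = ∑ j ∈ S, θ j * ‖g (z (j + 1)) - g xb - fderiv ℝ g xb (z (j + 1) - xb)‖ := by
          refine Finset.sum_congr rfl fun j _ => ?_
          rw [norm_smul, Real.norm_eq_abs, abs_of_nonneg (hθ0 j)]
      _ ≤ ∑ j ∈ S, θ j * (Lg / 2 * ‖z (j + 1) - xb‖ ^ 2) :=
          Finset.sum_le_sum fun j _ => mul_le_mul_of_nonneg_left
            (taylor_quad_bound g Lg hg hgSmooth xb (z (j + 1))) (hθ0 j)
      _ = Lg / 2 * ∑ j ∈ S, θ j * ‖z (j + 1) - xb‖ ^ 2 := by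
          rw [Finset.mul_sum]
          exact Finset.sum_congr rfl fun j _ => by ring
  calc ‖(∑ j ∈ S, θ j • gbar j) - g xb‖
      = ‖(∑ j ∈ S, θ j • (g (z (j + 1)) - g xb - fderiv ℝ g xb (z (j + 1) - xb)))
          + ∑ j ∈ S, θ j • (gbar j - g (z (j + 1)))‖ := by rw [key]
    _ ≤ ‖∑ j ∈ S, θ j • (g (z (j + 1)) - g xb - fderiv ℝ g xb (z (j + 1) - xb))‖
          + ‖∑ j ∈ S, θ j • (gbar j - g (z (j + 1)))‖ := norm_add_le _ _
    _ ≤ Lg / 2 * (∑ j ∈ S, θ j * ‖z (j + 1) - xb‖ ^ 2)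
          + ‖∑ j ∈ S, θ j • (gbar j - g (z (j + 1)))‖ := add_le_add_left hrem _
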